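/- Let I ⊆ R be a nonzero, proper S_n-invariant monomial ideal, μ = (d_1^{p_1},…,d_s^{p_s},0^{p_{s+1}}) ∈ P_n with d_1 > ⋯ > d_s > 0, and c ≤ p(μ). Let F be a facet of Γ^{μ,c}(I) with 1 ∉ F, set μ' = μ∖(c+e_{[s]∖F}) = (μ'_1,…,μ'_n), and h = min{i : μ'_i ≠ μ_1} (well-defined since 1 ∉ F forces the first entry of c+e_{[s]∖F} to be positive). If ρ = (∞,…,∞,ρ_l,…,ρ_n) ∈ Λ*(I) with ρ_l ≠ ∞ and μ' ≤ ρ (componentwise, with ∞ largest), then h ≥ l and μ_1 ≤ ρ_l + 1. -/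

import Mathlib

open scoped BigOperators

noncomputable section
open Classical

/-! ## Generic (labeled) simplicial chain complexes and reduced homology over a field -/

section Homology

variable (K : Type) [Field K] {α : Type}

/-- Index type for chains: elements of `S` whose face (second component) has `j` elements. -/
def ChainIdx (S : Set (α × Finset ℕ)) (j : ℕ) : Type :=
  {q : α × Finset ℕ // q ∈ S ∧ q.2.card = j}

/-- The boundary of a basis element, with the usual simplicial signs. -/
noncomputable def bdElt (S : Set (α × Finset ℕ)) (j : ℕ) (q : ChainIdx S (j + 1)) :
    ChainIdx S j →₀ K :=
  ∑ v ∈ q.1.2,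
    if h : (q.1.1, q.1.2.erase v) ∈ S ∧ (q.1.2.erase v).card = j then
      ((-1 : K) ^ (q.1.2.filter (fun u => u ≤ v)).card) •
        Finsupp.single (⟨(q.1.1, q.1.2.erase v), h⟩ : ChainIdx S j) (1 : K)
    else 0

/-- The simplicial boundary map. -/
noncomputable def bd (S : Set (α × Finset ℕ)) (j : ℕ) :
    (ChainIdx S (j + 1) →₀ K) →ₗ[K] (ChainIdx S j →₀ K) :=
  Finsupp.linearCombination K (bdElt K S j)

/-- Cycles in homological degree `j` (chains are indexed by the cardinality of faces;
degree `j` corresponds to reduced topological degree `j - 1`). -/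
noncomputable def cycles (S : Set (α × Finset ℕ)) : (j : ℕ) → Submodule K (ChainIdx S j →₀ K)
  | 0 => ⊤
  | (i + 1) => LinearMap.ker (bd K S i)

/-- `rhd K S j` is the dimension of the reduced homology group `H̃_{j-1}` of the complex `S`
(the chain groups being finite dimensional, this is `dim` cycles `- dim` boundaries). -/
noncomputable def rhd (S : Set (α × Finset ℕ)) (j : ℕ) : ℕ :=
  Module.finrank K (cycles K S j) -
    Module.finrank K (LinearMap.range (bd K S j) ⊓ cycles K S j : Submodule K _)

/-- `hdim K S j = dim_K H̃_j(S; K)`, for `j : ℤ` (zero for `j ≤ -2`). -/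
noncomputable def hdim (S : Set (α × Finset ℕ)) (j : ℤ) : ℕ :=
  if 0 ≤ j + 1 then rhd K S (j + 1).toNat else 0

/-- View an unlabeled collection of faces as a labeled one (labels in `Unit`). -/
def lab (Δ : Set (Finset ℕ)) : Set (Unit × Finset ℕ) := {q | q.2 ∈ Δ}

/-- Dimension of reduced homology `H̃_{j-1}(Δ; K)` of a collection `Δ` of finite sets. -/
noncomputable def rhd0 (Δ : Set (Finset ℕ)) (j : ℕ) : ℕ := rhd K (lab Δ) j

/-- Dimension of reduced homology `H̃_j(Δ; K)`, `j : ℤ`. -/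
noncomputable def hdim0 (Δ : Set (Finset ℕ)) (j : ℤ) : ℕ := hdim K (lab Δ) j

end Homology

/-! ## Monomial ideals in `k[x_1, …, x_n]`, invariant under the symmetric group -/

section Poly

variable (K : Type) [Field K] (n : ℕ)

/-- The monomial `x^a` in `k[x_1, …, x_n]`. -/
noncomputable def mon (a : Fin n → ℕ) : MvPolynomial (Fin n) K :=
  MvPolynomial.monomial (Finsupp.equivFunOnFinite.symm a) 1

/-- A monomial ideal: an ideal generated by a set of monomials. -/
def IsMonomialIdeal (I : Ideal (MvPolynomial (Fin n) K)) : Prop :=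
  ∃ S : Set (Fin n → ℕ), I = Ideal.span (mon K n '' S)

/-- `I` is invariant under the action of `S_n` permuting the variables. -/
def IsSymmetricIdeal (I : Ideal (MvPolynomial (Fin n) K)) : Prop :=
  ∀ σ : Equiv.Perm (Fin n), Ideal.map (MvPolynomial.rename σ).toRingHom I = I

end Poly

/-! ## Partitions given by blocks `(d_1^{p_1}, …, d_s^{p_s}, 0^{p_{s+1}})` -/

section Blocks

/-- `cumsum p k = p 0 + ⋯ + p (k-1)`. -/
def cumsum (p : ℕ → ℕ) (k : ℕ) : ℕ := ∑ j ∈ Finset.range k, p j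

/-- The index of the block (among blocks `0, …, s`) containing position `i`,
for blocks of sizes `p 0, …, p (s-1)` followed by a final block. -/
def blkOf (p : ℕ → ℕ) (s i : ℕ) : ℕ :=
  ((Finset.range s).filter fun k => cumsum p (k + 1) ≤ i).card

/-- The partition `μ = (d_0^{p_0}, …, d_{s-1}^{p_{s-1}}, 0^{p_s})` (0-indexed blocks),
as a function of the position `i ∈ {0, …, n-1}` where `n = cumsum p (s+1)`. -/
def muOf (s : ℕ) (d p : ℕ → ℕ) (i : ℕ) : ℕ :=
  if blkOf p s i < s then d (blkOf p s i) else 0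

/-- The partition `μ ∖ c`, obtained from `μ` by replacing, for each `k`, the last `c k` of
the parts equal to `d k` by `d k - 1`. -/
def muMinus (s : ℕ) (d p c : ℕ → ℕ) (i : ℕ) : ℕ :=
  if blkOf p s i < s then
    (if p (blkOf p s i) - c (blkOf p s i) ≤ i - cumsum p (blkOf p s i) then
      d (blkOf p s i) - 1 else d (blkOf p s i))
  else 0

/-- Indicator vector of a finite set `F`. -/
def eF (F : Finset ℕ) (j : ℕ) : ℕ := if j ∈ F then 1 else 0

end Blocks

/-! ## The simplicial complexes `Δ^{μ,c}(I)` and `Γ^{μ,c}(I)` -/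

section Complexes

variable (K : Type) [Field K] (n : ℕ)

/-- The simplicial complex `Δ^{μ,c}(I) = {F ⊆ [s] : μ ∖ (c + e_F) ∈ P(I)}` (vertices are
`0, …, s-1`), for `μ = (d_0^{p_0}, …, d_{s-1}^{p_{s-1}}, 0^{p_s})` and `c ≤ p(μ)`. -/
def DeltaCx (I : Ideal (MvPolynomial (Fin n) K)) (s : ℕ) (d p c : ℕ → ℕ) :
    Set (Finset ℕ) :=
  {F | F ⊆ Finset.range s ∧
    mon K n (fun i => muMinus s d p (fun j => c j + eF F j) i.val) ∈ I}

/-- The Alexander dual complex `Γ^{μ,c}(I) = {F ⊆ [s] : μ ∖ (c + e_{[s]∖F}) ∈ O(I)}`. -/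
def GammaCx (I : Ideal (MvPolynomial (Fin n) K)) (s : ℕ) (d p c : ℕ → ℕ) :
    Set (Finset ℕ) :=
  {F | F ⊆ Finset.range s ∧
    mon K n (fun i => muMinus s d p
      (fun j => c j + (if j < s ∧ j ∉ F then 1 else 0)) i.val) ∉ I}

/-- `γ_i^{μ,c}(I) = dim_K H̃_{i-1}(Δ^{μ,c}(I); K)`. -/
noncomputable def gammaDim (I : Ideal (MvPolynomial (Fin n) K)) (s : ℕ) (d p c : ℕ → ℕ)
    (i : ℕ) : ℕ :=
  rhd0 K (DeltaCx K n I s d p c) i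

end Complexes

/-! ## Multigraded Tor via the Koszul complex

For a monomial ideal `I`, the multidegree-`a` strand of the Koszul complex `K_•(I)` is the
(shifted) reduced chain complex of the simplicial complex
`Δ_a^I = {F ⊆ [n] : a - e_F ≥ 0, x^{a - e_F} ∈ I}`, so that
`dim_K Tor_i(I, K)_a = dim_K H̃_{i-1}(Δ_a^I; K)`, and similarly for `R/I` with the
condition `x^{a-e_F} ∉ I`. -/

section Tor

variable (K : Type) [Field K] (n : ℕ)

/-- The Koszul simplicial complex of the ideal `I` in multidegree `a`. -/
def KosI (I : Ideal (MvPolynomial (Fin n) K)) (a : Fin n → ℕ) : Set (Finset ℕ) :=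
  {F | F ⊆ Finset.range n ∧ (∀ i : Fin n, (i : ℕ) ∈ F → 1 ≤ a i) ∧
    mon K n (fun i => a i - eF F i.val) ∈ I}

/-- The Koszul complex of `R/I` in multidegree `a`. -/
def KosQ (I : Ideal (MvPolynomial (Fin n) K)) (a : Fin n → ℕ) : Set (Finset ℕ) :=
  {F | F ⊆ Finset.range n ∧ (∀ i : Fin n, (i : ℕ) ∈ F → 1 ≤ a i) ∧
    mon K n (fun i => a i - eF F i.val) ∉ I}

/-- `dim_K Tor_i(I, K)_a`, for a monomial ideal `I` and a multidegree `a ∈ ℤ^n`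
(components with a negative coordinate vanish, so only `a ∈ ℕ^n` is needed). -/
noncomputable def torDim (I : Ideal (MvPolynomial (Fin n) K)) (i : ℕ) (a : Fin n → ℕ) : ℕ :=
  rhd0 K (KosI K n I a) i

/-- `dim_K Tor_i(R/I, K)_a` for a monomial ideal `I`. -/
noncomputable def torQDim (I : Ideal (MvPolynomial (Fin n) K)) (i : ℕ) (a : Fin n → ℕ) : ℕ :=
  rhd0 K (KosQ K n I a) i

/-- `dim_K Tor_i(I, K)_{⟨μ⟩}`: the sum of `dim_K Tor_i(I, K)_a` over all rearrangements `a`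
of the partition `μ`. -/
noncomputable def torDimSym (I : Ideal (MvPolynomial (Fin n) K)) (i : ℕ) (μ : Fin n → ℕ) : ℕ :=
  ∑ a ∈ Finset.image (fun σ : Equiv.Perm (Fin n) => μ ∘ σ) Finset.univ, torDim K n I i a

/-- `dim_K Tor_i(R/I, K)_{⟨μ⟩}`. -/
noncomputable def torQDimSym (I : Ideal (MvPolynomial (Fin n) K)) (i : ℕ) (μ : Fin n → ℕ) : ℕ :=
  ∑ a ∈ Finset.image (fun σ : Equiv.Perm (Fin n) => μ ∘ σ) Finset.univ, torQDim K n I i a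

end Tor

/-! ## Extended partitions in `P_n^∞` and the dual generators of an `S_n`-invariant
monomial ideal -/

section ExtendedPartitions

variable (K : Type) [Field K] (n : ℕ)

/-- `ℓ(μ)`: the number of entries of `μ ∈ P_n^∞` equal to `∞`. -/
def ellInf (μ : Fin n → ℕ∞) : ℕ := (Finset.univ.filter fun i => μ i = ⊤).card

/-- The largest finite entry of `μ ∈ P_n^∞` (i.e. the first finite entry, `μ` being
weakly decreasing). -/
def topVal (μ : Fin n → ℕ∞) : ℕ := Finset.univ.sup fun i => (μ i).toNat

/-- `μ^+ ∈ P_n`: each `∞` entry of `μ` is replaced by (largest finite entry)` + 1`. -/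
def plusOf (μ : Fin n → ℕ∞) (i : Fin n) : ℕ :=
  if μ i = ⊤ then topVal n μ + 1 else (μ i).toNat

/-- `μ̃ = μ^+ + (0^{ℓ(μ)}, 1^{n - ℓ(μ)}) ∈ P_n`. -/
def tildeOf (μ : Fin n → ℕ∞) (i : Fin n) : ℕ :=
  if μ i = ⊤ then topVal n μ + 1 else (μ i).toNat + 1

/-- The ideal `Q_μ = ∩_{σ ∈ S_n} σ((x_k^{μ_k + 1}, …, x_n^{μ_n + 1}))`, where
`μ_k, …, μ_n` are the finite entries of `μ ∈ P_n^∞`. -/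
noncomputable def Qgen (μ : Fin n → ℕ∞) : Ideal (MvPolynomial (Fin n) K) :=
  ⨅ σ : Equiv.Perm (Fin n),
    Ideal.map (MvPolynomial.rename σ).toRingHom
      (Ideal.span {g | ∃ i : Fin n, μ i ≠ ⊤ ∧ g = MvPolynomial.X i ^ ((μ i).toNat + 1)})

/-- `Λ` is the (finite) set of dual generators of `I`, i.e. `I = ∩_{μ ∈ Λ} Q_μ` is the
irredundant presentation of `I` by ideals `Q_μ`. -/
def IsDualPresentation (I : Ideal (MvPolynomial (Fin n) K))
    (Λ : Finset (Fin n → ℕ∞)) : Prop :=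
  (∀ μ ∈ Λ, Antitone μ) ∧ (I = ⨅ μ ∈ Λ, Qgen K n μ) ∧
    ∀ μ ∈ Λ, I ≠ ⨅ ρ ∈ Λ, ⨅ _ : ρ ≠ μ, Qgen K n ρ

/-- The partial order `≼` on dual generators: `μ ≼ ρ` iff `μ̃ ≤ ρ̃` (componentwise) and
`ℓ(μ) - ℓ(ρ) ≤ |ρ̃| - |μ̃|`. -/
def preceq (μ ρ : Fin n → ℕ∞) : Prop :=
  (∀ i, tildeOf n μ i ≤ tildeOf n ρ i) ∧
    (∑ i, tildeOf n μ i) + ellInf n μ ≤ (∑ i, tildeOf n ρ i) + ellInf n ρ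

/-- The extended partition `ρ = (∞^{p_0}, d_1^{p_1}, …, d_s^{p_s}) ∈ P_n^∞`
(so `n = p 0 + p 1 + ⋯ + p s`), as a function of the position `i ∈ {0, …, n-1}`. -/
def rhoOf (s : ℕ) (d p : ℕ → ℕ) (i : ℕ) : ℕ∞ :=
  if blkOf p (s + 1) i = 0 then ⊤ else ((d (blkOf p (s + 1) i) : ℕ) : ℕ∞)

end ExtendedPartitions


/-! ## Auxiliary lemmas for Statement 11 -/

section Aux11

lemma blkOf_eq_zero' (p : ℕ → ℕ) (s i : ℕ) (hi : i < p 0) : blkOf p s i = 0 := by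
  unfold blkOf
  rw [Finset.card_eq_zero, Finset.filter_eq_empty_iff]
  intro k _ hk
  have h1 : p 0 ≤ cumsum p (k + 1) :=
    Finset.single_le_sum (fun j _ => Nat.zero_le (p j)) (Finset.mem_range.2 (Nat.succ_pos k))
  omega

lemma blkOf_pos' (p : ℕ → ℕ) (s i : ℕ) (hs : 0 < s) (hi : p 0 ≤ i) : 0 < blkOf p s i := by
  apply Finset.card_pos.2
  refine ⟨0, Finset.mem_filter.2 ⟨Finset.mem_range.2 hs, ?_⟩⟩
  simpa [cumsum] using hi

lemma d_lt_d0' (s : ℕ) (d : ℕ → ℕ) (hd : ∀ k, k + 1 < s → d (k + 1) < d k) :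
    ∀ b, 1 ≤ b → b < s → d b < d 0 := by
  intro b
  induction b with
  | zero => omega
  | succ m ih =>
    intro _ hbs
    have h1 : d (m + 1) < d m := hd m hbs
    rcases Nat.eq_zero_or_pos m with rfl | hm
    · simpa using h1
    · exact lt_trans h1 (ih hm (by omega))

lemma muMinus_block0' (s : ℕ) (d p cf : ℕ → ℕ) (i : ℕ) (hs : 0 < s) (hi : i < p 0) :
    muMinus s d p cf i = if p 0 - cf 0 ≤ i then d 0 - 1 else d 0 := by
  simp [muMinus, blkOf_eq_zero' p s i hi, hs, cumsum]

lemma muMinus_lt' (s : ℕ) (d p cf : ℕ → ℕ) (i : ℕ)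
    (hd : ∀ k, k + 1 < s → d (k + 1) < d k) (hd0 : 0 < d 0)
    (hs : 0 < s) (hi : p 0 ≤ i) : muMinus s d p cf i < d 0 := by
  have hb := blkOf_pos' p s i hs hi
  unfold muMinus
  split
  case isTrue hbs =>
    have hlt : d (blkOf p s i) < d 0 := d_lt_d0' s d hd _ hb hbs
    split <;> omega
  case isFalse => exact hd0

lemma Qgen_le_span' (K : Type) [Field K] (n : ℕ) (ρ : Fin n → ℕ∞) :
    Qgen K n ρ ≤ Ideal.span {g | ∃ i : Fin n, ρ i ≠ ⊤ ∧ g = MvPolynomial.X i ^ ((ρ i).toNat + 1)} := by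
  unfold Qgen
  refine le_trans (iInf_le _ (1 : Equiv.Perm (Fin n))) ?_
  have h1 : (MvPolynomial.rename (⇑(1 : Equiv.Perm (Fin n)))).toRingHom
      = RingHom.id (MvPolynomial (Fin n) K) := by
    refine RingHom.ext fun x => ?_
    simp [Equiv.Perm.coe_one]
  rw [h1, Ideal.map_id]

lemma mon_mem_span' (K : Type) [Field K] (n : ℕ) (ρ : Fin n → ℕ∞) (a : Fin n → ℕ)
    (hmem : mon K n a ∈ Ideal.span
      {g | ∃ i : Fin n, ρ i ≠ ⊤ ∧ g = MvPolynomial.X i ^ ((ρ i).toNat + 1)}) :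
    ∃ i, ρ i ≠ ⊤ ∧ (ρ i).toNat + 1 ≤ a i := by
  have hset : {g : MvPolynomial (Fin n) K |
        ∃ i : Fin n, ρ i ≠ ⊤ ∧ g = MvPolynomial.X i ^ ((ρ i).toNat + 1)}
      = (fun s => MvPolynomial.monomial s (1 : K)) ''
        {f : Fin n →₀ ℕ | ∃ i : Fin n, ρ i ≠ ⊤ ∧ f = Finsupp.single i ((ρ i).toNat + 1)} := by
    ext g
    constructor
    · rintro ⟨i, hi, rfl⟩
      exact ⟨Finsupp.single i ((ρ i).toNat + 1), ⟨i, hi, rfl⟩,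
        MvPolynomial.X_pow_eq_monomial.symm⟩
    · rintro ⟨f, ⟨i, hi, rfl⟩, rfl⟩
      exact ⟨i, hi, MvPolynomial.X_pow_eq_monomial.symm⟩
  rw [hset, MvPolynomial.mem_ideal_span_monomial_image] at hmem
  have hsup : (mon K n a).support = {Finsupp.equivFunOnFinite.symm a} := by
    simp [mon, MvPolynomial.support_monomial]
  rw [hsup] at hmem
  obtain ⟨si, ⟨i, hi, rfl⟩, hle⟩ := hmem _ (Finset.mem_singleton_self _)
  refine ⟨i, hi, ?_⟩
  have h2 := Finsupp.single_le_iff.1 hle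
  simpa using h2

end Aux11

/-- Let `I` be a nonzero, proper `S_n`-invariant monomial ideal,
`μ = (d_1^{p_1}, …, d_s^{p_s}, 0^{p_{s+1}}) ∈ P_n` with `d_1 > ⋯ > d_s > 0`, and
`c ≤ p(μ)`.  Let `F` be a facet of `Γ^{μ,c}(I)` not containing the first vertex, let
`μ' = μ ∖ (c + e_{[s]∖F})` and let `h` be the least index with `μ'_h ≠ μ_1`.  If
`ρ = (∞, …, ∞, ρ_l, …, ρ_n) ∈ Λ*(I)` (with `ρ_l ≠ ∞`) satisfies `μ' ≤ ρ`, then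
`h ≥ l` (i.e. `ℓ(ρ) ≤ h` with 0-indexed `h`) and `μ_1 ≤ ρ_l + 1`.
(Vertices of `Γ^{μ,c}(I)` are `0, …, s-1`, vertex `0` being the paper's vertex `1`;
positions in `μ` are `0`-indexed, and `ρ_l = topVal ρ` is the largest finite entry.) -/
theorem statement_11 (K : Type) [Field K] (n : ℕ) (I : Ideal (MvPolynomial (Fin n) K))
    (hmon : IsMonomialIdeal K n I) (hsym : IsSymmetricIdeal K n I)
    (hne : I ≠ ⊥) (hproper : I ≠ ⊤)
    (Λ : Finset (Fin n → ℕ∞)) (hpres : IsDualPresentation K n I Λ)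
    (s : ℕ) (d p : ℕ → ℕ)
    (hn : n = cumsum p (s + 1))
    (hd : ∀ k, k + 1 < s → d (k + 1) < d k)
    (hdpos : ∀ k, k < s → 0 < d k)
    (hppos : ∀ k, k < s → 0 < p k)
    (c : ℕ → ℕ) (hc : ∀ k, k < s → c k + 1 ≤ p k)
    (F : Finset ℕ)
    (hF : F ∈ GammaCx K n I s d p c)
    (hfacet : ∀ G ∈ GammaCx K n I s d p c, F ⊆ G → G = F)
    (h0F : 0 ∉ F)
    (μ' : Fin n → ℕ)
    (hμ' : μ' = fun t => muMinus s d p (fun j => c j + (if j < s ∧ j ∉ F then 1 else 0)) t.val)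
    (h : Fin n) (hh1 : μ' h ≠ muOf s d p 0) (hh2 : ∀ t : Fin n, t < h → μ' t = muOf s d p 0)
    (ρ : Fin n → ℕ∞) (hρΛ : ρ ∈ Λ) (hfin : ∃ t, ρ t ≠ ⊤)
    (hle : ∀ t : Fin n, ((μ' t : ℕ) : ℕ∞) ≤ ρ t) :
    ellInf n ρ ≤ (h : ℕ) ∧ muOf s d p 0 ≤ topVal n ρ + 1 := by
    classical
  have hs : 0 < s := by
    rcases Nat.eq_zero_or_pos s with rfl | hs
    · exact absurd (by simp [hμ', muMinus, muOf]) hh1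
    · exact hs
  have hd0 : 0 < d 0 := hdpos 0 hs
  have hc0 : c 0 + 1 ≤ p 0 := hc 0 hs
  have hp0pos : 0 < p 0 := by omega
  have hp0n : p 0 ≤ n := by
    rw [hn]
    exact Finset.single_le_sum (fun j _ => Nat.zero_le (p j)) (Finset.mem_range.2 (Nat.succ_pos s))
  have hh0lt : p 0 - (c 0 + 1) < p 0 := by omega
  have hh0n : p 0 - (c 0 + 1) < n := lt_of_lt_of_le hh0lt hp0n
  have hμ0 : ∀ i : Fin n, (i : ℕ) < p 0 →
      μ' i = if p 0 - (c 0 + 1) ≤ (i : ℕ) then d 0 - 1 else d 0 := by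
    intro i hi
    rw [hμ']
    show muMinus s d p _ _ = _
    rw [muMinus_block0' s d p _ _ hs hi]
    simp [hs, h0F]
  have hμlt : ∀ i : Fin n, p 0 ≤ (i : ℕ) → μ' i < d 0 := by
    intro i hi
    rw [hμ']
    exact muMinus_lt' s d p _ _ hd hd0 hs hi
  have hmuOf0 : muOf s d p 0 = d 0 := by
    simp [muOf, blkOf_eq_zero' p s 0 hp0pos, hs]
  have hhval : (h : ℕ) = p 0 - (c 0 + 1) := by
    rcases lt_trichotomy (h : ℕ) (p 0 - (c 0 + 1)) with hlt | heq | hgt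
    · exfalso
      apply hh1
      rw [hmuOf0, hμ0 h (by omega), if_neg (by omega)]
    · exact heq
    · exfalso
      have h2 := hh2 ⟨p 0 - (c 0 + 1), hh0n⟩ (by simpa [Fin.lt_def] using hgt)
      rw [hmuOf0, hμ0 _ (by simpa using hh0lt), if_pos (by simp)] at h2
      omega
  have hGnot : insert 0 F ∉ GammaCx K n I s d p c := by
    intro hG
    have h3 := hfacet _ hG (Finset.subset_insert 0 F)
    exact h0F (h3 ▸ Finset.mem_insert_self 0 F)
  have hFsub : F ⊆ Finset.range s := hF.1
  have hsub : insert 0 F ⊆ Finset.range s := by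
    intro x hx
    rcases Finset.mem_insert.1 hx with rfl | hx
    · exact Finset.mem_range.2 hs
    · exact hFsub hx
  have hνI : mon K n (fun i => muMinus s d p
      (fun j => c j + (if j < s ∧ j ∉ insert 0 F then 1 else 0)) i.val) ∈ I := by
    by_contra hcon
    apply hGnot
    exact ⟨hsub, hcon⟩
  have hν0 : ∀ i : Fin n, (i : ℕ) < p 0 →
      muMinus s d p (fun j => c j + (if j < s ∧ j ∉ insert 0 F then 1 else 0)) (i : ℕ)
        = if p 0 - c 0 ≤ (i : ℕ) then d 0 - 1 else d 0 := by
    intro i hi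
    rw [muMinus_block0' s d p _ _ hs hi]
    simp
  have hνeq : ∀ i : Fin n, (i : ℕ) ≠ p 0 - (c 0 + 1) →
      muMinus s d p (fun j => c j + (if j < s ∧ j ∉ insert 0 F then 1 else 0)) (i : ℕ)
        = μ' i := by
    intro i hi
    by_cases hip : (i : ℕ) < p 0
    · rw [hν0 i hip, hμ0 i hip]
      by_cases hcase : p 0 - (c 0 + 1) ≤ (i : ℕ)
      · rw [if_pos (by omega), if_pos hcase]
      · rw [if_neg (by omega), if_neg hcase]
    · push_neg at hip
      have hb0 : blkOf p s (i : ℕ) ≠ 0 := (blkOf_pos' p s _ hs hip).ne'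
      rw [hμ']
      show _ = muMinus s d p _ _
      simp only [muMinus]
      have hcf : (if blkOf p s (i : ℕ) < s ∧ blkOf p s (i : ℕ) ∉ insert 0 F then 1 else 0)
          = (if blkOf p s (i : ℕ) < s ∧ blkOf p s (i : ℕ) ∉ F then 1 else 0) := by
        simp [Finset.mem_insert, hb0]
      simp only [hcf]
  have hIQ : I ≤ Qgen K n ρ := by
    rw [hpres.2.1]
    exact biInf_le _ hρΛ
  obtain ⟨t, htT, htle⟩ := mon_mem_span' K n ρ _ (Qgen_le_span' K n ρ (hIQ hνI))
  have htle' : (ρ t).toNat + 1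
      ≤ muMinus s d p (fun j => c j + (if j < s ∧ j ∉ insert 0 F then 1 else 0)) (t : ℕ) := htle
  have hr : (((ρ t).toNat : ℕ) : ℕ∞) = ρ t := ENat.coe_toNat htT
  have htval : (t : ℕ) = p 0 - (c 0 + 1) := by
    by_contra hne'
    have h1 := hle t
    rw [← hνeq t hne', ← hr] at h1
    have h2 : muMinus s d p (fun j => c j + (if j < s ∧ j ∉ insert 0 F then 1 else 0)) (t : ℕ)
        ≤ (ρ t).toNat := by exact_mod_cast h1
    omega
  have hνt : muMinus s d p (fun j => c j + (if j < s ∧ j ∉ insert 0 F then 1 else 0)) (t : ℕ)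
      = d 0 := by
    rw [hν0 t (by omega), if_neg (by omega)]
  have hρt1 : (ρ t).toNat + 1 ≤ d 0 := by rw [hνt] at htle'; exact htle'
  have hρt2 : d 0 - 1 ≤ (ρ t).toNat := by
    have h1 := hle t
    rw [hμ0 t (by omega), if_pos (by omega), ← hr] at h1
    have h2 : d 0 - 1 ≤ (ρ t).toNat := by exact_mod_cast h1
    omega
  constructor
  · rw [hhval]
    unfold ellInf
    calc (Finset.univ.filter fun i : Fin n => ρ i = ⊤).card
        ≤ (Finset.range (p 0 - (c 0 + 1))).card := by
          apply Finset.card_le_card_of_injOn Fin.val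
          · intro i hi
            rw [Finset.mem_coe, Finset.mem_filter] at hi
            rw [Finset.mem_coe, Finset.mem_range]
            by_contra hge
            push_neg at hge
            have hti : t ≤ i := by rw [Fin.le_def]; omega
            have h5 : ρ i ≤ ρ t := (hpres.1 ρ hρΛ) hti
            rw [hi.2] at h5
            exact htT (top_le_iff.1 h5)
          · exact Fin.val_injective.injOn
      _ = p 0 - (c 0 + 1) := Finset.card_range _
  · rw [hmuOf0]
    have h4 : (ρ t).toNat ≤ topVal n ρ := by
      unfold topVal
      exact Finset.le_sup (f := fun i => (ρ i).toNat) (Finset.mem_univ t)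
    omega
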